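/- Every almost ι-complex is locally equivalent to a reduced almost ι-complex, i.e., one whose differential ∂ is congruent to 0 mod U (im ∂ ⊆ im U). -/

import Mathlib

open Polynomial

abbrev F2 : Type := ZMod 2
abbrev R : Type := Polynomial F2

noncomputable section

namespace AI

/-- The variable `U`. -/
def Uu : R := Polynomial.X

/-- The free `R`-module of rank `n`. -/
abbrev V (n : ℕ) : Type := Fin n → R

/-- The `i`-th standard basis vector. -/
def e {n : ℕ} (i : Fin n) : V n := fun j => if j = i then 1 else 0

/-- The `i`-th standard basis vector over `F2`. -/
def e2 {n : ℕ} (i : Fin n) : Fin n → F2 := fun j => if j = i then 1 else 0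

/-- `x` lies in the image of multiplication by `U`. -/
def modU {n : ℕ} (x : V n) : Prop := ∀ j, (x j).coeff 0 = 0

/-- `x` is homogeneous of degree `c` with respect to the generator gradings `gr`
(where `deg U = -2`). -/
def IsHomog {n : ℕ} (gr : Fin n → ℤ) (c : ℤ) (x : V n) : Prop :=
  ∀ (j : Fin n) (m : ℕ), (x j).coeff m ≠ 0 → gr j - 2 * (m : ℤ) = c

/-- `f` is a graded `R`-linear map of degree `dg`. -/
def GradedMap {m n : ℕ} (gr₁ : Fin m → ℤ) (gr₂ : Fin n → ℤ) (dg : ℤ)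
    (f : V m →ₗ[R] V n) : Prop :=
  ∀ i : Fin m, IsHomog gr₂ (gr₁ i + dg) (f (e i))

/-- The raw data of a free finitely generated `ℤ`-graded complex over `R = F[U]`. -/
structure PreCplx where
  n : ℕ
  gr : Fin n → ℤ
  d : V n →ₗ[R] V n

def IsCycle (C : PreCplx) (x : V C.n) : Prop := C.d x = 0

def IsBdry (C : PreCplx) (x : V C.n) : Prop := ∃ y, C.d y = x

/-- `x` is a cycle representing a `U`-nontorsion homology class. -/
def NontorsionClass (C : PreCplx) (x : V C.n) : Prop :=
  IsCycle C x ∧ ∀ k : ℕ, ¬ IsBdry C ((Uu ^ k) • x)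

/-- `U⁻¹H_*(C) ≅ F[U, U⁻¹]`, generated by a degree-zero cycle (normalization
convention: the maximal degree of a `U`-nontorsion cycle class is zero, so the
localized homology is supported in even degrees). -/
def HtowerCond (C : PreCplx) : Prop :=
  ∃ x : V C.n, IsCycle C x ∧ IsHomog C.gr 0 x ∧
    (∀ k : ℕ, ¬ IsBdry C ((Uu ^ k) • x)) ∧
    (∀ y : V C.n, IsCycle C y →
      ∃ (k : ℕ) (p : R) (z : V C.n), (Uu ^ k) • y = p • x + C.d z)

/-- `C` is a genuine graded chain complex. -/
def IsCplx (C : PreCplx) : Prop :=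
  GradedMap C.gr C.gr (-1) C.d ∧ C.d ∘ₗ C.d = 0

/-- `f` and `g` are homotopic mod `U`. -/
def HomotopicModU (C₁ C₂ : PreCplx) (f g : V C₁.n →ₗ[R] V C₂.n) : Prop :=
  ∃ H : V C₁.n →ₗ[R] V C₂.n, GradedMap C₁.gr C₂.gr 1 H ∧
    ∀ x, modU ((f + g + H ∘ₗ C₁.d + C₂.d ∘ₗ H) x)

/-- The raw data of an almost ι-complex. -/
structure PreAI extends PreCplx where
  ι : V n →ₗ[R] V n

/-- `ω = 1 + ι`. -/
def omega (C : PreAI) : V C.n →ₗ[R] V C.n := LinearMap.id + C.ι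

/-- `C` is an almost ι-complex. -/
def IsAICplx (C : PreAI) : Prop :=
  IsCplx C.toPreCplx ∧
  GradedMap C.gr C.gr 0 C.ι ∧
  (∀ x, modU ((C.ι ∘ₗ C.d + C.d ∘ₗ C.ι) x)) ∧
  HomotopicModU C.toPreCplx C.toPreCplx (C.ι ∘ₗ C.ι) LinearMap.id ∧
  HtowerCond C.toPreCplx

/-- `C` is a genuine ι-complex: `ι` is an honest chain map whose square is
genuinely chain homotopic to the identity. -/
def IsIotaCplx (C : PreAI) : Prop :=
  IsCplx C.toPreCplx ∧
  GradedMap C.gr C.gr 0 C.ι ∧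
  C.ι ∘ₗ C.d = C.d ∘ₗ C.ι ∧
  (∃ H : V C.n →ₗ[R] V C.n, GradedMap C.gr C.gr 1 H ∧
    C.ι ∘ₗ C.ι + LinearMap.id = H ∘ₗ C.d + C.d ∘ₗ H) ∧
  HtowerCond C.toPreCplx

/-- A reduced complex: the differential vanishes mod `U`. -/
def Reduced (C : PreAI) : Prop := ∀ x, modU (C.d x)

/-- `f` is an almost ι-morphism. -/
def isAIMorphism (C₁ C₂ : PreAI) (f : V C₁.n →ₗ[R] V C₂.n) : Prop :=
  GradedMap C₁.gr C₂.gr 0 f ∧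
  f ∘ₗ C₁.d = C₂.d ∘ₗ f ∧
  HomotopicModU C₁.toPreCplx C₂.toPreCplx (f ∘ₗ C₁.ι) (C₂.ι ∘ₗ f)

/-- A local map: an almost ι-morphism inducing an isomorphism on `U`-localized
homology (equivalently, with the normalization conventions in force, preserving
`U`-nontorsion cycle classes). -/
def isLocalMap (C₁ C₂ : PreAI) (f : V C₁.n →ₗ[R] V C₂.n) : Prop :=
  isAIMorphism C₁ C₂ f ∧
  ∀ x, NontorsionClass C₁.toPreCplx x → NontorsionClass C₂.toPreCplx (f x)

/-- Local equivalence of almost ι-complexes. -/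
def LocallyEquiv (C₁ C₂ : PreAI) : Prop :=
  (∃ f, isLocalMap C₁ C₂ f) ∧ (∃ g, isLocalMap C₂ C₁ g)

/-- The tensor product (over `R`) of linear maps between free modules,
in the bases indexed by `finProdFinEquiv`. -/
def tmap {m n m' n' : ℕ} (f : V m →ₗ[R] V m') (g : V n →ₗ[R] V n') :
    V (m * n) →ₗ[R] V (m' * n') where
  toFun x := fun p => ∑ q : Fin (m * n),
    x q * f (e (finProdFinEquiv.symm q).1) (finProdFinEquiv.symm p).1
        * g (e (finProdFinEquiv.symm q).2) (finProdFinEquiv.symm p).2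
  map_add' x y := by
    funext p
    simp [Pi.add_apply, add_mul, Finset.sum_add_distrib]
  map_smul' c x := by
    funext p
    simp only [RingHom.id_apply, Pi.smul_apply, smul_eq_mul, Finset.mul_sum]
    exact Finset.sum_congr rfl fun q _ => by ring

/-- The tensor product of complexes. -/
def tensorPre (C₁ C₂ : PreCplx) : PreCplx where
  n := C₁.n * C₂.n
  gr := fun q => C₁.gr (finProdFinEquiv.symm q).1 + C₂.gr (finProdFinEquiv.symm q).2
  d := tmap C₁.d LinearMap.id + tmap LinearMap.id C₂.d

/-- The tensor product of almost ι-complexes. -/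
def tensorAI (C₁ C₂ : PreAI) : PreAI where
  toPreCplx := tensorPre C₁.toPreCplx C₂.toPreCplx
  ι := tmap C₁.ι C₂.ι

/-- The transpose of a square matrix map (the dual map in the dual basis). -/
def tr {n : ℕ} (f : V n →ₗ[R] V n) : V n →ₗ[R] V n where
  toFun x := fun j => ∑ i : Fin n, x i * f (e j) i
  map_add' x y := by
    funext j
    simp [Pi.add_apply, add_mul, Finset.sum_add_distrib]
  map_smul' c x := by
    funext j
    simp only [RingHom.id_apply, Pi.smul_apply, smul_eq_mul, Finset.mul_sum]
    exact Finset.sum_congr rfl fun i _ => by ring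

/-- The dual complex. -/
def dualPre (C : PreCplx) : PreCplx where
  n := C.n
  gr := fun i => -C.gr i
  d := tr C.d

/-- The dual almost ι-complex. -/
def dualAI (C : PreAI) : PreAI where
  toPreCplx := dualPre C.toPreCplx
  ι := tr C.ι

/-- The trivial complex `C(0) = (F[U], ∂ = 0, ι = id)`. -/
def cZero : PreAI := ⟨⟨1, fun _ => 0, 0⟩, LinearMap.id⟩

/-- The contraction map `C ⊗ C^∨ → F[U]`, `x ⊗ y ↦ y(x)`. -/
def contr (n : ℕ) : V (n * n) →ₗ[R] V 1 where
  toFun x := fun _ => ∑ i : Fin n, x (finProdFinEquiv (i, i))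
  map_add' x y := by funext j; simp [Pi.add_apply, Finset.sum_add_distrib]
  map_smul' c x := by
    funext j
    simp only [RingHom.id_apply, Pi.smul_apply, smul_eq_mul, Finset.mul_sum]

/-! ### Standard and augmented complexes -/

/-- The `i`-th symbol (0-indexed) of the parameter sequence, padded by zeros. -/
def seqAt (M : List ℤ) (i : ℕ) : ℤ := M.getD i 0

/-- Grading step of a `b`-arrow. -/
def bstep (b : ℤ) : ℤ := (if 0 < b then 1 else -1) - 2 * b

/-- Grading of the generator `T_i` of the standard/augmented complex. -/
def stdGr (M : List ℤ) (i : ℕ) : ℤ :=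
  ∑ s ∈ Finset.range i, if s % 2 = 1 then bstep (seqAt M s) else 0

/-- A linear endomorphism of `V n` given by a matrix of coefficients. -/
def ofMatrix {n : ℕ} (c : ℕ → ℕ → R) : V n →ₗ[R] V n where
  toFun x := fun j => ∑ i : Fin n, x i * c i j
  map_add' x y := by
    funext j
    simp [Pi.add_apply, add_mul, Finset.sum_add_distrib]
  map_smul' r x := by
    funext j
    simp only [RingHom.id_apply, Pi.smul_apply, smul_eq_mul, Finset.mul_sum]
    exact Finset.sum_congr rfl fun i _ => by ring

/-- Matrix of the differential of the standard/augmented complex: the `b`-symbol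
at (0-indexed) odd position `s` of `M` relates `T_s` and `T_{s+1}`. -/
def dCoef (M : List ℤ) (i j : ℕ) : R :=
  if i % 2 = 1 ∧ seqAt M i < 0 ∧ j = i + 1 then Uu ^ (seqAt M i).natAbs
  else if i % 2 = 0 ∧ 0 < i ∧ 0 < seqAt M (i - 1) ∧ j + 1 = i then
    Uu ^ (seqAt M (i - 1)).natAbs
  else 0

/-- Matrix of `ω = 1 + ι` on the standard/augmented complex: the `a`-symbol at
(0-indexed) even position `s` of `M` relates `T_s` and `T_{s+1}`. -/
def wCoef (M : List ℤ) (i j : ℕ) : R :=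
  if i % 2 = 0 ∧ seqAt M i = -1 ∧ j = i + 1 then 1
  else if i % 2 = 1 ∧ seqAt M (i - 1) = 1 ∧ j + 1 = i then 1
  else 0

/-- Matrix of `ι = 1 + ω` (char 2). -/
def iCoef (M : List ℤ) (i j : ℕ) : R :=
  (if i = j then 1 else 0) + wCoef M i j

/-- The standard (even length) or augmented (odd length) complex on generators
`T_0, …, T_{M.length}` determined by the symbol sequence `M`. -/
def symCplx (M : List ℤ) : PreAI :=
  ⟨⟨M.length + 1, fun i => stdGr M i, ofMatrix (dCoef M)⟩, ofMatrix (iCoef M)⟩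

/-- Validity of a standard parameter sequence. -/
def StdParams (M : List ℤ) : Prop :=
  M.length % 2 = 0 ∧
  ∀ i < M.length, if i % 2 = 0 then seqAt M i = 1 ∨ seqAt M i = -1 else seqAt M i ≠ 0

/-- Validity of an augmented parameter sequence. -/
def AugParams (M : List ℤ) : Prop :=
  M.length % 2 = 1 ∧
  ∀ i < M.length, if i % 2 = 0 then seqAt M i = 1 ∨ seqAt M i = -1 else seqAt M i ≠ 0

/-- The modified order `<!` on `ℤ`: `−1 <! −2 <! ⋯ <! 0 <! ⋯ <! 2 <! 1`. -/
def ltB (x y : ℤ) : Prop :=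
  (x < 0 ∧ 0 ≤ y) ∨ (x ≤ 0 ∧ 0 < y) ∨ (x < 0 ∧ y < 0 ∧ y < x) ∨ (0 < x ∧ 0 < y ∧ y < x)

def leB (x y : ℤ) : Prop := ltB x y ∨ x = y

/-- Strict lexicographic order on (zero-padded) parameter sequences. -/
def lexLt (M M' : List ℤ) : Prop :=
  ∃ k : ℕ, (∀ i < k, seqAt M i = seqAt M' i) ∧ ltB (seqAt M k) (seqAt M' k)

def lexLe (M M' : List ℤ) : Prop := lexLt M M' ∨ ∀ i, seqAt M i = seqAt M' i

/-- A short map from the standard (even `M.length`) or augmented (odd `M.length`)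
complex determined by `M` to `A`: the `ω`-condition (standard case) resp. the
`∂`-condition (augmented case) is waived on the final generator. -/
def isShortMap (M : List ℤ) (A : PreAI) (f : V (M.length + 1) →ₗ[R] V A.n) : Prop :=
  GradedMap (symCplx M).gr A.gr 0 f ∧
  (∀ i : Fin (M.length + 1), ((i : ℕ) < M.length ∨ M.length % 2 = 0) →
    A.d (f (e i)) = f ((symCplx M).d (e i))) ∧
  (∀ i : Fin (M.length + 1), ((i : ℕ) < M.length ∨ M.length % 2 = 1) →
    modU ((omega A) (f (e i)) + f ((omega (symCplx M)) (e i))))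

/-- A local short map: `T_0` goes to a `U`-nontorsion cycle class. -/
def isLocalShortMap (M : List ℤ) (A : PreAI) (f : V (M.length + 1) →ₗ[R] V A.n) : Prop :=
  isShortMap M A f ∧ NontorsionClass A.toPreCplx (f (e ⟨0, Nat.succ_pos _⟩))

/-- The sequence of invariants `s_i(A)` (1-indexed in the paper; 0-indexed here):
`s k` is the `≤!`-maximum of the `(k+1)`-st symbols among standard complexes
locally mapping to `A` whose first `k` symbols are `s 0, …, s (k-1)`. -/
def IsInvariantSeq (A : PreAI) (s : ℕ → ℤ) : Prop :=
  ∀ k : ℕ,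
    (∃ M : List ℤ, StdParams M ∧ (∃ f, isLocalMap (symCplx M) A f) ∧
      ∀ i ≤ k, seqAt M i = s i) ∧
    (∀ M : List ℤ, StdParams M → (∃ f, isLocalMap (symCplx M) A f) →
      (∀ i < k, seqAt M i = s i) → leB (seqAt M k) (s k))

/-- Reduction mod `U` of a linear map, as an `F₂`-linear map. -/
def mapHat {m n : ℕ} (f : V m →ₗ[R] V n) : (Fin m → F2) →ₗ[F2] (Fin n → F2) where
  toFun x := fun j => ∑ i : Fin m, x i * (f (e i) j).coeff 0
  map_add' x y := by
    funext j
    simp [Pi.add_apply, add_mul, Finset.sum_add_distrib]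
  map_smul' c x := by
    funext j
    simp only [RingHom.id_apply, Pi.smul_apply, smul_eq_mul, Finset.mul_sum]
    exact Finset.sum_congr rfl fun i _ => by ring

/-- The induced action `ω̂` on `C/U`. -/
def wHat (C : PreAI) : (Fin C.n → F2) →ₗ[F2] (Fin C.n → F2) := mapHat (omega C)

end AI

namespace AI

section Basic

lemma two_eq_zeroR : (2 : R) = 0 := by
  have h1 : (2 : R) = Polynomial.C 1 + Polynomial.C 1 := by
    rw [← Polynomial.C_add]
    norm_num
    rfl
  rw [h1, ← Polynomial.C_add]
  norm_num
  rfl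

lemma addself {n : ℕ} (a : V n) : a + a = 0 := by
  have := two_smul R a
  rw [two_eq_zeroR, zero_smul] at this
  exact this.symm

lemma addselfR (a : R) : a + a = 0 := by
  have : a + a = (2 : R) * a := by ring
  rw [this, two_eq_zeroR, zero_mul]

lemma rep {n : ℕ} (x : V n) : x = ∑ i, x i • e i := by
  funext j
  simp [e, Finset.sum_apply, Pi.smul_apply, smul_eq_mul]

lemma map_rep {m n : ℕ} (p : V m →ₗ[R] V n) (x : V m) :
    p x = ∑ i, x i • p (e i) := by
  conv_lhs => rw [rep x]
  rw [map_sum]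
  simp

lemma lmap_ext {m n : ℕ} {f g : V m →ₗ[R] V n} (h : ∀ i, f (e i) = g (e i)) : f = g := by
  apply LinearMap.ext
  intro x
  rw [map_rep f x, map_rep g x]
  exact Finset.sum_congr rfl fun i _ => by rw [h i]

lemma modU_add {n : ℕ} {x y : V n} (hx : modU x) (hy : modU y) : modU (x + y) := by
  intro j
  simp [Pi.add_apply, Polynomial.coeff_add, hx j, hy j]

lemma modU_mapped {m n : ℕ} (p : V m →ₗ[R] V n) {x : V m} (hx : modU x) : modU (p x) := by
  have hxe : x = Uu • fun j => (x j).divX := by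
    funext j
    have := Polynomial.X_mul_divX_add (p := x j)
    simp only [Pi.smul_apply, smul_eq_mul, Uu]
    rw [hx j] at this
    simpa using this.symm
  rw [hxe, map_smul]
  intro j
  simp [Uu, Pi.smul_apply, Polynomial.coeff_X_mul_zero]

end Basic

section Graded

lemma isHomog_zero {n : ℕ} (gr : Fin n → ℤ) (c : ℤ) : IsHomog gr c (0 : V n) := by
  intro j m hm
  simp at hm

lemma isHomog_congr {n : ℕ} {gr : Fin n → ℤ} {c c' : ℤ} (h : c = c') {x : V n}
    (hx : IsHomog gr c x) : IsHomog gr c' x := h ▸ hx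

lemma isHomog_add {n : ℕ} {gr : Fin n → ℤ} {c : ℤ} {x y : V n}
    (hx : IsHomog gr c x) (hy : IsHomog gr c y) : IsHomog gr c (x + y) := by
  intro j m hm
  rw [Pi.add_apply, Polynomial.coeff_add] at hm
  rcases (by by_contra hc; push_neg at hc; rw [hc.1, hc.2, add_zero] at hm; exact hm rfl :
      (x j).coeff m ≠ 0 ∨ (y j).coeff m ≠ 0) with h | h
  · exact hx j m h
  · exact hy j m h

lemma isHomog_e {n : ℕ} (gr : Fin n → ℤ) (i : Fin n) : IsHomog gr (gr i) (e i) := by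
  intro j m hm
  simp only [e] at hm
  by_cases hji : j = i
  · subst hji
    have hm0 : m = 0 := by
      by_contra hc
      simp [Polynomial.coeff_one, hc] at hm
    subst hm0
    simp
  · simp [hji] at hm

lemma homog_map {m n : ℕ} {gr₁ : Fin m → ℤ} {gr₂ : Fin n → ℤ} {dg c : ℤ}
    {p : V m →ₗ[R] V n} (hp : GradedMap gr₁ gr₂ dg p) {x : V m} (hx : IsHomog gr₁ c x) :
    IsHomog gr₂ (c + dg) (p x) := by
  intro j mm hmm
  rw [map_rep p x] at hmm
  simp only [Finset.sum_apply, Pi.smul_apply, smul_eq_mul] at hmm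
  rw [Polynomial.finset_sum_coeff] at hmm
  obtain ⟨i, -, hi⟩ := Finset.exists_ne_zero_of_sum_ne_zero hmm
  rw [Polynomial.coeff_mul] at hi
  obtain ⟨ab, hab, hab2⟩ := Finset.exists_ne_zero_of_sum_ne_zero hi
  rw [Finset.HasAntidiagonal.mem_antidiagonal] at hab
  have h1 : (x i).coeff ab.1 ≠ 0 := fun h => hab2 (by rw [h, zero_mul])
  have h2 : ((p (e i)) j).coeff ab.2 ≠ 0 := fun h => hab2 (by rw [h, mul_zero])
  have e1 := hx i ab.1 h1
  have e2 := hp i j ab.2 h2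
  have : (mm : ℤ) = (ab.1 : ℤ) + (ab.2 : ℤ) := by exact_mod_cast hab.symm
  omega

lemma gradedMap_comp {m n k : ℕ} {gr₁ : Fin m → ℤ} {gr₂ : Fin n → ℤ} {gr₃ : Fin k → ℤ}
    {a b c : ℤ} {f : V m →ₗ[R] V n} {p : V n →ₗ[R] V k}
    (hf : GradedMap gr₁ gr₂ a f) (hp : GradedMap gr₂ gr₃ b p) (h : a + b = c) :
    GradedMap gr₁ gr₃ c (p ∘ₗ f) := by
  intro i
  have := homog_map hp (hf i)
  rw [LinearMap.comp_apply]
  exact isHomog_congr (by omega) this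

lemma gradedMap_add {m n : ℕ} {gr₁ : Fin m → ℤ} {gr₂ : Fin n → ℤ} {a : ℤ}
    {f g : V m →ₗ[R] V n} (hf : GradedMap gr₁ gr₂ a f) (hg : GradedMap gr₁ gr₂ a g) :
    GradedMap gr₁ gr₂ a (f + g) := by
  intro i
  rw [LinearMap.add_apply]
  exact isHomog_add (hf i) (hg i)

lemma gradedMap_id {n : ℕ} (gr : Fin n → ℤ) : GradedMap gr gr 0 LinearMap.id := by
  intro i
  rw [LinearMap.id_apply]
  exact isHomog_congr (by omega) (isHomog_e gr i)

lemma gradedMap_zero {m n : ℕ} (gr₁ : Fin m → ℤ) (gr₂ : Fin n → ℤ) (a : ℤ) :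
    GradedMap gr₁ gr₂ a (0 : V m →ₗ[R] V n) := by
  intro i
  rw [LinearMap.zero_apply]
  exact isHomog_zero _ _

end Graded

section LocalMaps

@[simp] lemma two_mul_zeroV {n : ℕ} (a : V n) : 2 * a = 0 := by
  funext j
  show (2 : R) * a j = 0
  rw [two_eq_zeroR, zero_mul]

@[simp] lemma two_zsmul_zero {n : ℕ} (a : V n) : (2:ℤ) • a = 0 := by
  rw [two_zsmul]; exact addself a

@[simp] lemma two_nsmul_zero {n : ℕ} (a : V n) : (2:ℕ) • a = 0 := by
  rw [two_nsmul]; exact addself a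

lemma isLocalMap_id (C : PreAI) (h : IsAICplx C) : isLocalMap C C LinearMap.id := by
  refine ⟨⟨gradedMap_id _, rfl, 0, gradedMap_zero _ _ _, ?_⟩, ?_⟩
  · intro x
    have : (LinearMap.id ∘ₗ C.ι + C.ι ∘ₗ LinearMap.id + (0:V C.n →ₗ[R] V C.n) ∘ₗ C.d
        + C.d ∘ₗ (0:V C.n →ₗ[R] V C.n)) x = 0 := by
      simp only [LinearMap.add_apply, LinearMap.comp_apply, LinearMap.id_apply,
        LinearMap.zero_apply, map_zero, add_zero]
      exact addself _
    rw [this]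
    intro j; simp
  · intro x hx
    simpa using hx

lemma isLocalMap_comp {C₁ C₂ C₃ : PreAI} {f₁ : V C₁.n →ₗ[R] V C₂.n}
    {f₂ : V C₂.n →ₗ[R] V C₃.n} (h₁ : isLocalMap C₁ C₂ f₁) (h₂ : isLocalMap C₂ C₃ f₂) :
    isLocalMap C₁ C₃ (f₂ ∘ₗ f₁) := by
  obtain ⟨⟨hg₁, hc₁, H₁, hH₁g, hH₁⟩, hnt₁⟩ := h₁
  obtain ⟨⟨hg₂, hc₂, H₂, hH₂g, hH₂⟩, hnt₂⟩ := h₂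
  have c₁ : ∀ x, f₁ (C₁.d x) = C₂.d (f₁ x) := fun x => LinearMap.congr_fun hc₁ x
  have c₂ : ∀ x, f₂ (C₂.d x) = C₃.d (f₂ x) := fun x => LinearMap.congr_fun hc₂ x
  refine ⟨⟨gradedMap_comp hg₁ hg₂ (by ring), ?_, H₂ ∘ₗ f₁ + f₂ ∘ₗ H₁, ?_, ?_⟩, ?_⟩
  · apply LinearMap.ext; intro x
    simp only [LinearMap.comp_apply, c₁, c₂]
  · exact gradedMap_add (gradedMap_comp hg₁ hH₂g (by ring))
      (gradedMap_comp hH₁g hg₂ (by ring))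
  · intro x
    have key : ((f₂ ∘ₗ f₁) ∘ₗ C₁.ι + C₃.ι ∘ₗ (f₂ ∘ₗ f₁) + (H₂ ∘ₗ f₁ + f₂ ∘ₗ H₁) ∘ₗ C₁.d
        + C₃.d ∘ₗ (H₂ ∘ₗ f₁ + f₂ ∘ₗ H₁)) x
        = f₂ ((f₁ ∘ₗ C₁.ι + C₂.ι ∘ₗ f₁ + H₁ ∘ₗ C₁.d + C₂.d ∘ₗ H₁) x)
          + (f₂ ∘ₗ C₂.ι + C₃.ι ∘ₗ f₂ + H₂ ∘ₗ C₂.d + C₃.d ∘ₗ H₂) (f₁ x) := by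
      simp only [LinearMap.add_apply, LinearMap.comp_apply, map_add]
      rw [c₂ (H₁ x), ← c₁ x]
      abel_nf
      simp
    rw [key]
    exact modU_add (modU_mapped f₂ (hH₁ x)) (hH₂ (f₁ x))
  · intro x hx
    rw [LinearMap.comp_apply]
    exact hnt₂ _ (hnt₁ _ hx)

lemma locallyEquiv_refl (C : PreAI) (h : IsAICplx C) : LocallyEquiv C C :=
  ⟨⟨_, isLocalMap_id C h⟩, ⟨_, isLocalMap_id C h⟩⟩

lemma locallyEquiv_trans {C₁ C₂ C₃ : PreAI} (h₁ : LocallyEquiv C₁ C₂)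
    (h₂ : LocallyEquiv C₂ C₃) : LocallyEquiv C₁ C₃ :=
  ⟨⟨_, isLocalMap_comp h₁.1.choose_spec h₂.1.choose_spec⟩,
   ⟨_, isLocalMap_comp h₂.2.choose_spec h₁.2.choose_spec⟩⟩

end LocalMaps

namespace Cancel

variable (C : PreAI) (i j : Fin C.n)

/-- Number of remaining generators. -/
def n' : ℕ := Fintype.card {k : Fin C.n // k ≠ i ∧ k ≠ j}

/-- Embedding of remaining generators. -/
def emb (k : Fin (n' C i j)) : Fin C.n :=
  ((Fintype.equivFin {k : Fin C.n // k ≠ i ∧ k ≠ j}).symm k).val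

lemma emb_ne_i (k : Fin (n' C i j)) : emb C i j k ≠ i :=
  ((Fintype.equivFin {k : Fin C.n // k ≠ i ∧ k ≠ j}).symm k).2.1

lemma emb_ne_j (k : Fin (n' C i j)) : emb C i j k ≠ j :=
  ((Fintype.equivFin {k : Fin C.n // k ≠ i ∧ k ≠ j}).symm k).2.2

lemma emb_inj {k k' : Fin (n' C i j)} (h : emb C i j k = emb C i j k') : k = k' :=
  (Fintype.equivFin {k : Fin C.n // k ≠ i ∧ k ≠ j}).symm.injective (Subtype.ext h)

lemma emb_cases (l : Fin C.n) : i = l ∨ j = l ∨ ∃ k, emb C i j k = l := by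
  by_cases h1 : l = i
  · exact Or.inl h1.symm
  by_cases h2 : l = j
  · exact Or.inr (Or.inl h2.symm)
  · exact Or.inr (Or.inr ⟨(Fintype.equivFin {k : Fin C.n // k ≠ i ∧ k ≠ j}) ⟨l, h1, h2⟩,
      by simp [emb]⟩)

lemma n'_lt (hn : 0 < C.n) : n' C i j < C.n := by
  have : ¬ ((i : Fin C.n) ≠ i ∧ (i : Fin C.n) ≠ j) := by simp
  have h := Fintype.card_subtype_lt (p := fun k : Fin C.n => k ≠ i ∧ k ≠ j) (x := i) this
  simpa [n'] using h

/-- The projection map `f`. -/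
def fm : V C.n →ₗ[R] V (n' C i j) where
  toFun v := fun k => v (emb C i j k) + v j * C.d (e i) (emb C i j k)
  map_add' x y := by
    funext k
    simp only [Pi.add_apply]
    ring
  map_smul' c x := by
    funext k
    simp only [RingHom.id_apply, Pi.smul_apply, smul_eq_mul]
    ring

/-- The inclusion map `g`. -/
def gm : V (n' C i j) →ₗ[R] V C.n where
  toFun w := fun l => ∑ k, w k * (e (emb C i j k) l + C.d (e (emb C i j k)) j * e i l)
  map_add' x y := by
    funext l
    simp [Pi.add_apply, add_mul, Finset.sum_add_distrib]
  map_smul' c x := by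
    funext l
    simp only [RingHom.id_apply, Pi.smul_apply, smul_eq_mul, Finset.mul_sum]
    exact Finset.sum_congr rfl fun k _ => by ring

/-- The homotopy `H`. -/
def Hm : V C.n →ₗ[R] V C.n where
  toFun v := fun l => v j * e i l
  map_add' x y := by
    funext l
    simp only [Pi.add_apply]
    ring
  map_smul' c x := by
    funext l
    simp only [RingHom.id_apply, Pi.smul_apply, smul_eq_mul]
    ring

/-- Grading on remaining generators. -/
def gr' : Fin (n' C i j) → ℤ := fun k => C.gr (emb C i j k)

/-- The reduced complex. -/
def C' : PreAI :=
  ⟨⟨n' C i j, gr' C i j, fm C i j ∘ₗ C.d ∘ₗ gm C i j⟩,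
    fm C i j ∘ₗ C.ι ∘ₗ gm C i j⟩

lemma e_self {n : ℕ} (a : Fin n) : e a a = 1 := if_pos rfl

lemma e_ne {n : ℕ} {a b : Fin n} (h : b ≠ a) : e a b = 0 := if_neg h

lemma H_apply (v : V C.n) : Hm C i j v = v j • e i := by
  funext l
  simp [Hm, Pi.smul_apply, smul_eq_mul]

lemma f_ei (hij : i ≠ j) : fm C i j (e i) = 0 := by
  funext k
  simp [fm, e_ne (emb_ne_i C i j k), e_ne (Ne.symm hij)]

lemma f_ej (hij : i ≠ j) (k : Fin (n' C i j)) : fm C i j (e j) k = C.d (e i) (emb C i j k) := by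
  simp [fm, e_ne (emb_ne_j C i j k), e_self]

lemma f_emb (k₀ : Fin (n' C i j)) : fm C i j (e (emb C i j k₀)) = e k₀ := by
  funext k
  have : e (emb C i j k₀) (emb C i j k) = e k₀ k := by
    by_cases h : k = k₀
    · subst h; simp [e_self]
    · rw [e_ne (fun hc => h (emb_inj C i j hc)), e_ne h]
  simp [fm, this, e_ne (Ne.symm (emb_ne_j C i j k₀))]

lemma g_basis (k₀ : Fin (n' C i j)) :
    gm C i j (e k₀) = e (emb C i j k₀) + C.d (e (emb C i j k₀)) j • e i := by
  funext l
  simp only [gm, LinearMap.coe_mk, AddHom.coe_mk, Pi.add_apply, Pi.smul_apply, smul_eq_mul]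
  rw [Finset.sum_eq_single k₀ (fun k _ hk => by rw [e_ne hk, zero_mul])
    (fun h => absurd (Finset.mem_univ k₀) h)]
  rw [e_self, one_mul]

/-- Sum splitting over the three kinds of indices. -/
lemma sum_split {M : Type*} [AddCommMonoid M] (hij : i ≠ j) (F : Fin C.n → M) :
    ∑ l, F l = (∑ k, F (emb C i j k)) + F i + F j := by
  classical
  have h1 : ∑ k, F (emb C i j k)
      = ∑ s : {k : Fin C.n // k ≠ i ∧ k ≠ j}, F s.val := by
    exact Fintype.sum_equiv (Fintype.equivFin {k : Fin C.n // k ≠ i ∧ k ≠ j}).symm _ _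
      (fun k => rfl)
  have h2 : ∑ s : {k : Fin C.n // k ≠ i ∧ k ≠ j}, F s.val
      = ∑ l ∈ Finset.univ.filter (fun l => l ≠ i ∧ l ≠ j), F l := by
    exact (Finset.sum_subtype (p := fun l => l ≠ i ∧ l ≠ j)
      (Finset.univ.filter (fun l => l ≠ i ∧ l ≠ j)) (fun x => by simp) F).symm
  have h3 : ∑ l, F l = (∑ l ∈ Finset.univ.filter (fun l => l ≠ i ∧ l ≠ j), F l)
      + ∑ l ∈ Finset.univ.filter (fun l => ¬(l ≠ i ∧ l ≠ j)), F l :=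
    (Finset.sum_filter_add_sum_filter_not _ _ _).symm
  have h4 : Finset.univ.filter (fun l : Fin C.n => ¬(l ≠ i ∧ l ≠ j)) = {i, j} := by
    ext l
    simp only [Finset.mem_filter, Finset.mem_univ, true_and, Finset.mem_insert,
      Finset.mem_singleton]
    tauto
  rw [h3, h4, Finset.sum_pair hij, h1, h2, add_assoc]

lemma char2_solve {n : ℕ} {a b c : V n} (h : a = b + c) : b = a + c := by
  rw [h, add_assoc, addself, add_zero]

lemma char2_solve3 {n : ℕ} {a S x y : V n} (h : a = S + x + y) : S = a + x + y := by
  rw [h, show S + x + y + x + y = S + (x + x) + (y + y) from by abel, addself, addself,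
    add_zero, add_zero]

lemma f_A (hAj : C.d (e i) j = 1) : fm C i j (C.d (e i)) = 0 := by
  funext k
  simp only [fm, LinearMap.coe_mk, AddHom.coe_mk, hAj, one_mul]
  exact addselfR _

lemma E1 (hij : i ≠ j) : fm C i j ∘ₗ gm C i j = LinearMap.id := by
  apply lmap_ext
  intro k₀
  rw [LinearMap.comp_apply, LinearMap.id_apply, g_basis, map_add, map_smul, f_emb,
    f_ei C i j hij, smul_zero, add_zero]

lemma E1v (hij : i ≠ j) (w : V (n' C i j)) : fm C i j (gm C i j w) = w := by
  have := LinearMap.congr_fun (E1 C i j hij) w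
  simpa using this

lemma dA_sum (hd2 : C.d ∘ₗ C.d = (0 : V C.n →ₗ[R] V C.n)) :
    ∑ l, C.d (e i) l * C.d (e l) j = 0 := by
  have h0 : C.d (C.d (e i)) = 0 := by
    have := LinearMap.congr_fun hd2 (e i)
    simpa using this
  have h1 : C.d (C.d (e i)) = ∑ l, C.d (e i) l • C.d (e l) := map_rep _ _
  have h2 : (∑ l, C.d (e i) l • C.d (e l)) j = ∑ l, C.d (e i) l * C.d (e l) j := by
    simp [Finset.sum_apply, Pi.smul_apply, smul_eq_mul]
  rw [← h2, ← h1, h0]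
  rfl

lemma subsum (hij : i ≠ j) (hAj : C.d (e i) j = 1)
    (hd2 : C.d ∘ₗ C.d = (0 : V C.n →ₗ[R] V C.n)) :
    ∑ k, C.d (e i) (emb C i j k) * C.d (e (emb C i j k)) j
      = C.d (e i) i + C.d (e j) j := by
  have hs := sum_split C i j hij (fun l => C.d (e i) l * C.d (e l) j)
  rw [dA_sum C i j hd2, hAj] at hs
  linear_combination -hs - (C.d (e i) i + C.d (e j) j) * two_eq_zeroR

lemma E2 (hij : i ≠ j) (hAj : C.d (e i) j = 1)
    (hd2 : C.d ∘ₗ C.d = (0 : V C.n →ₗ[R] V C.n)) :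
    gm C i j ∘ₗ fm C i j
      = LinearMap.id + C.d ∘ₗ Hm C i j + Hm C i j ∘ₗ C.d := by
  apply lmap_ext
  intro l
  simp only [LinearMap.comp_apply, LinearMap.add_apply, LinearMap.id_apply]
  rcases emb_cases C i j l with rfl | rfl | ⟨k₀, rfl⟩
  · rw [f_ei C i j hij, map_zero, H_apply, H_apply, e_ne (Ne.symm hij), zero_smul,
      map_zero, add_zero, hAj, one_smul]
    exact (addself _).symm
  · have hfej : fm C i j (e j) = ∑ k, C.d (e i) (emb C i j k) • e k := by
      conv_lhs => rw [rep (fm C i j (e j))]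
      exact Finset.sum_congr rfl fun k _ => by rw [f_ej C i j hij]
    have hgf : gm C i j (fm C i j (e j))
        = (∑ k, C.d (e i) (emb C i j k) • e (emb C i j k))
          + (∑ k, C.d (e i) (emb C i j k) * C.d (e (emb C i j k)) j) • e i := by
      rw [hfej, map_sum]
      simp only [map_smul, g_basis, smul_add, smul_smul, Finset.sum_add_distrib,
        Finset.sum_smul]
    have hA : ∑ k, C.d (e i) (emb C i j k) • e (emb C i j k)
        = C.d (e i) + C.d (e i) i • e i + C.d (e i) j • e j := by
      have h := sum_split C i j hij (fun l => C.d (e i) l • e l)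
      rw [← rep] at h
      exact char2_solve3 h
    rw [hgf, hA, subsum C i j hij hAj hd2, H_apply, H_apply, e_self, one_smul, hAj,
      one_smul, add_smul]
    abel_nf
    simp
  · rw [f_emb, g_basis, H_apply, H_apply, e_ne (Ne.symm (emb_ne_j C i j k₀)), zero_smul,
      map_zero, add_zero]

lemma E2v (hij : i ≠ j) (hAj : C.d (e i) j = 1)
    (hd2 : C.d ∘ₗ C.d = (0 : V C.n →ₗ[R] V C.n)) (v : V C.n) :
    gm C i j (fm C i j v) = v + C.d (Hm C i j v) + Hm C i j (C.d v) := by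
  have := LinearMap.congr_fun (E2 C i j hij hAj hd2) v
  simpa using this

lemma E3 (hij : i ≠ j) (hAj : C.d (e i) j = 1) (w : V (n' C i j)) :
    Hm C i j (C.d (gm C i j w)) = 0 := by
  have hmap : Hm C i j ∘ₗ (C.d ∘ₗ gm C i j) = 0 := by
    apply lmap_ext
    intro k₀
    rw [LinearMap.comp_apply, LinearMap.comp_apply, g_basis, map_add, map_smul, H_apply,
      LinearMap.zero_apply]
    have : (C.d (e (emb C i j k₀)) + C.d (e (emb C i j k₀)) j • C.d (e i)) j
        = C.d (e (emb C i j k₀)) j + C.d (e (emb C i j k₀)) j * C.d (e i) j := rfl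
    rw [this, hAj, mul_one, addselfR, zero_smul]
  have := LinearMap.congr_fun hmap w
  simpa using this

lemma E4 (hAj : C.d (e i) j = 1) (v : V C.n) :
    fm C i j (C.d (Hm C i j (C.d v))) = 0 := by
  rw [H_apply, map_smul, map_smul, f_A C i j hAj, smul_zero]

lemma hd2v (hd2 : C.d ∘ₗ C.d = (0 : V C.n →ₗ[R] V C.n)) (v : V C.n) :
    C.d (C.d v) = 0 := by
  have := LinearMap.congr_fun hd2 v
  simpa using this

lemma Cd_eq : (C' C i j).d = fm C i j ∘ₗ C.d ∘ₗ gm C i j := rfl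

lemma Cι_eq : (C' C i j).ι = fm C i j ∘ₗ C.ι ∘ₗ gm C i j := rfl

lemma Cgr_eq : (C' C i j).gr = gr' C i j := rfl

lemma fd_comm (hij : i ≠ j) (hAj : C.d (e i) j = 1)
    (hd2 : C.d ∘ₗ C.d = (0 : V C.n →ₗ[R] V C.n)) (v : V C.n) :
    fm C i j (C.d v) = (C' C i j).d (fm C i j v) := by
  show fm C i j (C.d v) = fm C i j (C.d (gm C i j (fm C i j v)))
  rw [E2v C i j hij hAj hd2 v]
  simp only [map_add]
  rw [hd2v C hd2, map_zero, E4 C i j hAj, add_zero, add_zero]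

lemma dg_comm (hij : i ≠ j) (hAj : C.d (e i) j = 1)
    (hd2 : C.d ∘ₗ C.d = (0 : V C.n →ₗ[R] V C.n)) (w : V (n' C i j)) :
    C.d (gm C i j w) = gm C i j ((C' C i j).d w) := by
  show C.d (gm C i j w) = gm C i j (fm C i j (C.d (gm C i j w)))
  rw [E2v C i j hij hAj hd2 (C.d (gm C i j w))]
  rw [E3 C i j hij hAj, map_zero, hd2v C hd2, map_zero, add_zero, add_zero]

lemma grj (hAj : C.d (e i) j = 1) (hdg : GradedMap C.gr C.gr (-1) C.d) :
    C.gr j = C.gr i - 1 := by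
  have := hdg i j 0 (by rw [hAj]; simp)
  omega

lemma ne_ij (hAj : C.d (e i) j = 1) (hdg : GradedMap C.gr C.gr (-1) C.d) : i ≠ j := by
  intro h
  have := grj C i j hAj hdg
  rw [h] at this
  omega

lemma f_graded (hAj : C.d (e i) j = 1) (hdg : GradedMap C.gr C.gr (-1) C.d) :
    GradedMap C.gr (gr' C i j) 0 (fm C i j) := by
  have hij := ne_ij C i j hAj hdg
  intro l
  rcases emb_cases C i j l with rfl | rfl | ⟨k₀, rfl⟩
  · rw [f_ei C i j hij]
    exact isHomog_zero _ _
  · intro k m hm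
    rw [f_ej C i j hij] at hm
    have h1 := hdg i (emb C i j k) m hm
    have h2 := grj C i j hAj hdg
    show C.gr (emb C i j k) - 2 * (m : ℤ) = C.gr j + 0
    omega
  · rw [f_emb]
    have : gr' C i j k₀ = C.gr (emb C i j k₀) + 0 := by
      show C.gr (emb C i j k₀) = _
      omega
    exact isHomog_congr this (isHomog_e (gr' C i j) k₀)

lemma g_graded (hAj : C.d (e i) j = 1) (hdg : GradedMap C.gr C.gr (-1) C.d) :
    GradedMap (gr' C i j) C.gr 0 (gm C i j) := by
  have hij := ne_ij C i j hAj hdg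
  intro k₀
  rw [g_basis]
  apply isHomog_add
  · exact isHomog_congr (show C.gr (emb C i j k₀) = gr' C i j k₀ + 0 by
      show _ = C.gr (emb C i j k₀) + 0; omega) (isHomog_e C.gr (emb C i j k₀))
  · intro l m hm
    by_cases hl : l = i
    · rw [hl] at hm ⊢
      rw [Pi.smul_apply, smul_eq_mul, e_self, mul_one] at hm
      have h1 := hdg (emb C i j k₀) j m hm
      have h2 := grj C i j hAj hdg
      show C.gr i - 2 * (m : ℤ) = C.gr (emb C i j k₀) + 0
      omega
    · rw [Pi.smul_apply, smul_eq_mul, e_ne hl, mul_zero] at hm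
      exact absurd rfl hm

lemma H_graded (hAj : C.d (e i) j = 1) (hdg : GradedMap C.gr C.gr (-1) C.d) :
    GradedMap C.gr C.gr 1 (Hm C i j) := by
  intro l
  rw [H_apply]
  by_cases hl : l = j
  · rw [hl]
    rw [e_self, one_smul]
    exact isHomog_congr (by have := grj C i j hAj hdg; omega) (isHomog_e C.gr i)
  · rw [e_ne (fun h => hl h.symm), zero_smul]
    exact isHomog_zero _ _

lemma modU_zero {n : ℕ} : modU (0 : V n) := fun j => by simp

lemma char2_aux {n : ℕ} (a b : V n) : a + b + b = a := by
  rw [add_assoc, addself, add_zero]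

lemma modU_of_eq {n : ℕ} {x y : V n} (h : x = y) (hy : modU y) : modU x := h ▸ hy

end Cancel

open Cancel in
set_option maxHeartbeats 1000000 in
/-- Abstract cancellation: if `D` is obtained from `C` by compressing along a
homotopy equivalence `(f, g, H)`, then `D` is an almost ι-complex locally
equivalent to `C`. -/
lemma abstract_step (C D : PreAI) (f : V C.n →ₗ[R] V D.n) (g : V D.n →ₗ[R] V C.n)
    (H : V C.n →ₗ[R] V C.n) (hC : IsAICplx C)
    (hfgr : GradedMap C.gr D.gr 0 f) (hggr : GradedMap D.gr C.gr 0 g)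
    (hHgr : GradedMap C.gr C.gr 1 H)
    (hfg : ∀ w, f (g w) = w)
    (hgf : ∀ v, g (f v) = v + C.d (H v) + H (C.d v))
    (hHdg : ∀ w, H (C.d (g w)) = 0)
    (hfdHd : ∀ v, f (C.d (H (C.d v))) = 0)
    (hDd : D.d = f ∘ₗ C.d ∘ₗ g)
    (hDι : D.ι = f ∘ₗ C.ι ∘ₗ g) :
    IsAICplx D ∧ LocallyEquiv C D := by
  obtain ⟨⟨hdg, hd2⟩, hιg, hQ, ⟨G, hGg, hG⟩, htower⟩ := hC
  have hQv : ∀ v, modU (C.ι (C.d v) + C.d (C.ι v)) := fun v => hQ v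
  have hGv : ∀ v, modU (C.ι (C.ι v) + v + G (C.d v) + C.d (G v)) := fun v => hG v
  have hιv : ∀ v, D.ι v = f (C.ι (g v)) := fun v => LinearMap.congr_fun hDι v
  have hdv : ∀ v, D.d v = f (C.d (g v)) := fun v => LinearMap.congr_fun hDd v
  have hd2v : ∀ v, C.d (C.d v) = 0 := fun v => LinearMap.congr_fun hd2 v
  have fd_comm : ∀ v, f (C.d v) = D.d (f v) := by
    intro v
    rw [hdv, hgf v]
    simp only [map_add]
    rw [hd2v, map_zero, hfdHd, add_zero, add_zero]
  have dg_comm : ∀ w, C.d (g w) = g (D.d w) := by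
    intro w
    rw [hdv, hgf (C.d (g w))]
    rw [hHdg, map_zero, hd2v, map_zero, add_zero, add_zero]
  constructor
  · refine ⟨⟨?_, ?_⟩, ?_, ?_, ?_, ?_⟩
    · -- d graded
      rw [hDd]
      exact gradedMap_comp (gradedMap_comp (c := -1) hggr hdg (by norm_num))
        hfgr (by norm_num)
    · -- d² = 0
      apply LinearMap.ext
      intro w
      show D.d (D.d w) = 0
      rw [hdv (D.d w), ← dg_comm, hd2v, map_zero]
    · -- ι graded
      rw [hDι]
      exact gradedMap_comp (gradedMap_comp (c := 0) hggr hιg (by norm_num))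
        hfgr (by norm_num)
    · -- ιd + dι ≡ 0
      intro x
      simp only [LinearMap.add_apply, LinearMap.comp_apply, hιv, hdv]
      simp only [hgf]
      simp only [map_add, hHdg, hd2v, hfdHd, map_zero, add_zero, zero_add]
      refine modU_of_eq (y := f (C.ι (C.d (g x)) + C.d (C.ι (g x)))) ?_ ?_
      · simp only [map_add]
      · exact modU_mapped _ (hQv _)
    · -- ι² ≃ id
      refine ⟨f ∘ₗ (G + C.ι ∘ₗ H ∘ₗ C.ι) ∘ₗ g, ?_, ?_⟩
      · exact gradedMap_comp (gradedMap_comp (c := 1) hggr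
          (gradedMap_add hGg (gradedMap_comp (c := 1)
            (gradedMap_comp (c := 1) hιg hHgr (by norm_num)) hιg (by norm_num)))
          (by norm_num)) hfgr (by norm_num)
      · intro x
        simp only [LinearMap.add_apply, LinearMap.comp_apply, LinearMap.id_apply,
          hιv, hdv]
        simp only [hgf]
        simp only [map_add, hHdg, hd2v, hfdHd, map_zero, add_zero, zero_add, hfg]
        refine modU_of_eq (y :=
            f (C.ι (C.ι (g x)) + g x + G (C.d (g x)) + C.d (G (g x)))
            + f (C.ι (C.d (H (C.ι (g x)))) + C.d (C.ι (H (C.ι (g x)))))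
            + f (C.ι (H (C.ι (C.d (g x)) + C.d (C.ι (g x)))))) ?_ ?_
        · simp only [map_add, hfg]
          abel
        · refine modU_add (modU_add (modU_mapped _ (hGv _)) (modU_mapped _ (hQv _))) ?_
          exact modU_mapped (f ∘ₗ C.ι ∘ₗ H) (hQv _)
    · -- tower
      obtain ⟨x₀, hcyc, hhom, hnb, hgen⟩ := htower
      have hcyc' : C.d x₀ = 0 := hcyc
      refine ⟨f x₀, ?_, ?_, ?_, ?_⟩
      · show D.d (f x₀) = 0
        rw [← fd_comm, hcyc', map_zero]
      · exact isHomog_congr (by norm_num) (homog_map hfgr hhom)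
      · intro k hbd
        obtain ⟨z, hz⟩ := hbd
        apply hnb k
        refine ⟨g z + Uu ^ k • H x₀, ?_⟩
        have h1 : C.d (g z) = g (D.d z) := dg_comm z
        rw [hz, map_smul] at h1
        simp only [hgf, hcyc', map_zero, add_zero] at h1
        rw [map_add, map_smul, h1, smul_add]
        exact char2_aux _ _
      · intro y hy
        have hy' : C.d (g y) = 0 := by
          rw [dg_comm y, show D.d y = 0 from hy, map_zero]
        obtain ⟨k, p, z, hz⟩ := hgen (g y) hy'
        refine ⟨k, p, f z, ?_⟩
        have hfz := congrArg f hz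
        simp only [map_smul, map_add, hfg, fd_comm] at hfz
        exact hfz
  · constructor
    · -- local map C → D
      refine ⟨f, ⟨hfgr, LinearMap.ext fd_comm, f ∘ₗ C.ι ∘ₗ H, ?_, ?_⟩, ?_⟩
      · exact gradedMap_comp (gradedMap_comp (c := 1) hHgr hιg (by norm_num))
          hfgr (by norm_num)
      · intro x
        simp only [LinearMap.add_apply, LinearMap.comp_apply, hιv, hdv]
        simp only [hgf]
        simp only [map_add, hHdg, hd2v, hfdHd, map_zero, add_zero, zero_add]
        refine modU_of_eq
          (y := f (C.ι (C.d (H x)) + C.d (C.ι (H x)))) ?_ ?_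
        · simp only [map_add]
          abel_nf
          simp
        · exact modU_mapped _ (hQv _)
      · intro x hx
        obtain ⟨hxc, hxnb⟩ := hx
        have hxc' : C.d x = 0 := hxc
        constructor
        · show D.d (f x) = 0
          rw [← fd_comm, hxc', map_zero]
        · intro k hbd
          obtain ⟨z, hz⟩ := hbd
          apply hxnb k
          refine ⟨g z + Uu ^ k • H x, ?_⟩
          have h1 : C.d (g z) = g (D.d z) := dg_comm z
          rw [hz, map_smul] at h1
          simp only [hgf, hxc', map_zero, add_zero] at h1
          rw [map_add, map_smul, h1, smul_add]
          exact char2_aux _ _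
    · -- local map D → C
      refine ⟨g, ⟨hggr, LinearMap.ext (fun w => (dg_comm w).symm),
        H ∘ₗ C.ι ∘ₗ g, ?_, ?_⟩, ?_⟩
      · exact gradedMap_comp (gradedMap_comp (c := 0) hggr hιg (by norm_num))
          hHgr (by norm_num)
      · intro x
        simp only [LinearMap.add_apply, LinearMap.comp_apply, hιv, hdv]
        simp only [hgf]
        simp only [map_add, hHdg, hd2v, hfdHd, map_zero, add_zero, zero_add]
        refine modU_of_eq
          (y := H (C.ι (C.d (g x)) + C.d (C.ι (g x)))) ?_ ?_
        · simp only [map_add]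
          abel_nf
          simp
        · exact modU_mapped _ (hQv _)
      · intro y hy
        obtain ⟨hyc, hynb⟩ := hy
        have hyc' : D.d y = 0 := hyc
        constructor
        · show C.d (g y) = 0
          rw [dg_comm y, hyc', map_zero]
        · intro k hbd
          obtain ⟨z, hz⟩ := hbd
          apply hynb k
          refine ⟨f z, ?_⟩
          rw [← fd_comm, hz, map_smul]
          simp only [hfg]

open Cancel in
lemma cancel_step (C : PreAI) (hC : IsAICplx C) (hnr : ¬ Reduced C) :
    ∃ D : PreAI, D.n < C.n ∧ IsAICplx D ∧ LocallyEquiv C D := by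
  have hdg : GradedMap C.gr C.gr (-1) C.d := hC.1.1
  have hd2 : C.d ∘ₗ C.d = 0 := hC.1.2
  -- find a unit entry of the differential
  have hex : ∃ (a : Fin C.n) (b : Fin C.n), ((C.d (e a)) b).coeff 0 ≠ 0 := by
    rw [Reduced] at hnr
    push_neg at hnr
    obtain ⟨v, hv⟩ := hnr
    rw [modU] at hv
    push_neg at hv
    obtain ⟨jj, hjj⟩ := hv
    rw [map_rep C.d v] at hjj
    have hco : (∑ l, v l • C.d (e l)) jj = ∑ l, v l * C.d (e l) jj := by
      simp [Finset.sum_apply, Pi.smul_apply, smul_eq_mul]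
    rw [hco, Polynomial.finset_sum_coeff] at hjj
    obtain ⟨l, -, hl⟩ := Finset.exists_ne_zero_of_sum_ne_zero hjj
    rw [Polynomial.mul_coeff_zero] at hl
    exact ⟨l, jj, fun h => hl (by rw [h, mul_zero])⟩
  obtain ⟨i, j, hc0⟩ := hex
  have hAj : C.d (e i) j = 1 := by
    have hco : (C.d (e i) j).coeff 0 = 1 := by
      have hall : ∀ a : F2, a ≠ 0 → a = 1 := by decide
      exact hall _ hc0
    have hgrj0 := hdg i j 0 (by rw [hco]; exact one_ne_zero)
    apply Polynomial.ext
    intro m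
    by_cases hm : m = 0
    · subst hm
      rw [hco, Polynomial.coeff_one]
      simp
    · rw [Polynomial.coeff_one, if_neg hm]
      by_contra hne
      have := hdg i j m hne
      omega
  have hij : i ≠ j := ne_ij C i j hAj hdg
  refine ⟨C' C i j, n'_lt C i j i.pos, ?_⟩
  exact abstract_step C (C' C i j) (fm C i j) (gm C i j) (Hm C i j) hC
    (f_graded C i j hAj hdg) (g_graded C i j hAj hdg) (H_graded C i j hAj hdg)
    (E1v C i j hij) (E2v C i j hij hAj hd2) (E3 C i j hij hAj) (E4 C i j hAj)
    rfl rfl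
end AI

namespace AI

/-- every almost ι-complex is locally equivalent to a reduced one. -/
lemma reduced_of_aux : ∀ n : ℕ, ∀ C : PreAI, C.n ≤ n → IsAICplx C →
    ∃ C' : PreAI, IsAICplx C' ∧ Reduced C' ∧ LocallyEquiv C C' := by
  intro n
  induction n with
  | zero =>
    intro C hle hC
    have hred : Reduced C := by
      intro x j
      exact absurd j.isLt (by omega)
    exact ⟨C, hC, hred, locallyEquiv_refl C hC⟩
  | succ n ih =>
    intro C hle hC
    by_cases hred : Reduced C
    · exact ⟨C, hC, hred, locallyEquiv_refl C hC⟩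
    · obtain ⟨D, hlt, hD, hCD⟩ := cancel_step C hC hred
      obtain ⟨C', hC', hred', hDC'⟩ := ih D (by omega) hD
      exact ⟨C', hC', hred', locallyEquiv_trans hCD hDC'⟩

theorem locallyEquiv_reduced (C : PreAI) (h : IsAICplx C) :
    ∃ C' : PreAI, IsAICplx C' ∧ Reduced C' ∧ LocallyEquiv C C' :=
  reduced_of_aux C.n C le_rfl h

end AI
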